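/- Let S ∈ V with H₀(S,S) = −1 (so ε = +1) and W := {x ∈ V : H₀(S,x) = 0}. Then H₀ restricted to W has signature (3,3), K_S restricts to a paracomplex structure on W (i.e., K_S(W) ⊆ W and K_S² = id on W), and the (+1)-eigenspace and the (−1)-eigenspace of K_S|_W are each 3-dimensional and totally isotropic for H₀. -/

import Mathlib

noncomputable section

noncomputable section

/-- `V = ℝ⁷` with its standard basis. -/
abbrev V7 : Type := Fin 7 → ℝ

/-- Evaluation of the basis 3-form `eⁱ ∧ eʲ ∧ eᵏ` on `(x, y, z)`: the determinant of the
3×3 matrix of the corresponding coordinates. -/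
def tripleDet (i j k : Fin 7) (x y z : V7) : ℝ :=
  x i * (y j * z k - y k * z j) - x j * (y i * z k - y k * z i) + x k * (y i * z j - y j * z i)

/-- The split-generic 3-form `Φ₀ = −e¹∧e⁴∧e⁷ + √2·e¹∧e⁵∧e⁶ + √2·e²∧e³∧e⁷ + e²∧e⁴∧e⁵ + e³∧e⁴∧e⁶`
(indices here are 0-indexed). -/
def Phi0 (x y z : V7) : ℝ :=
  -(tripleDet 0 3 6 x y z) + Real.sqrt 2 * tripleDet 0 4 5 x y z
    + Real.sqrt 2 * tripleDet 1 2 6 x y z + tripleDet 1 3 4 x y z + tripleDet 2 3 5 x y z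

/-- The symmetric bilinear form `H₀` of signature (3,4):
`H₀(E₁,E₇) = H₀(E₂,E₅) = H₀(E₃,E₆) = 1`, `H₀(E₄,E₄) = −1` (1-indexed). -/
def H0 (x y : V7) : ℝ :=
  x 0 * y 6 + x 6 * y 0 + x 1 * y 4 + x 4 * y 1 + x 2 * y 5 + x 5 * y 2 - x 3 * y 3

section VecEval
variable {α : Type*} (a b c d e f g : α)
@[simp] lemma vec7_at0 : ![a,b,c,d,e,f,g] 0 = a := rfl
@[simp] lemma vec7_at1 : ![a,b,c,d,e,f,g] 1 = b := rfl
@[simp] lemma vec7_at2 : ![a,b,c,d,e,f,g] 2 = c := rfl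
@[simp] lemma vec7_at3 : ![a,b,c,d,e,f,g] 3 = d := rfl
@[simp] lemma vec7_at4 : ![a,b,c,d,e,f,g] 4 = e := rfl
@[simp] lemma vec7_at5 : ![a,b,c,d,e,f,g] 5 = f := rfl
@[simp] lemma vec7_at6 : ![a,b,c,d,e,f,g] 6 = g := rfl
@[simp] lemma vec3_at0 : ![a,b,c] 0 = a := rfl
@[simp] lemma vec3_at1 : ![a,b,c] 1 = b := rfl
@[simp] lemma vec3_at2 : ![a,b,c] 2 = c := rfl
end VecEval

/-- The linear functional `x ↦ H₀(S, x)`. -/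
def phiL (S : V7) : V7 →ₗ[ℝ] ℝ where
  toFun x := H0 S x
  map_add' x y := by simp only [H0, Pi.add_apply]; ring
  map_smul' t x := by simp only [H0, Pi.smul_apply, smul_eq_mul, RingHom.id_apply]; ring

@[simp] lemma phiL_apply (S x : V7) : phiL S x = H0 S x := rfl

/-- Linear map whose kernel is the standard negative-definite 4-space `N₀`. -/
def psiL : V7 →ₗ[ℝ] (Fin 3 → ℝ) where
  toFun x := ![x 0 + x 6, x 1 + x 4, x 2 + x 5]
  map_add' x y := by funext i; fin_cases i <;> simp [Pi.add_apply] <;> ring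
  map_smul' t x := by funext i; fin_cases i <;> simp [Pi.smul_apply, smul_eq_mul] <;> ring

@[simp] lemma psiL_apply (x : V7) : psiL x = ![x 0 + x 6, x 1 + x 4, x 2 + x 5] := rfl

/-- Parametrization of the standard positive 3-space `P₀`. -/
def QL : (Fin 3 → ℝ) →ₗ[ℝ] V7 where
  toFun c := ![c 0, c 1, c 2, 0, c 1, c 2, c 0]
  map_add' c d := by funext i; fin_cases i <;> simp [Pi.add_apply]
  map_smul' t c := by funext i; fin_cases i <;> simp [Pi.smul_apply, smul_eq_mul]

@[simp] lemma QL_apply (c : Fin 3 → ℝ) : QL c = ![c 0, c 1, c 2, 0, c 1, c 2, c 0] := rfl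

/-- Parametrization of the positive 3-space `P ⊆ S^⊥`: project `P₀` into `S^⊥`. -/
def AL (S : V7) : (Fin 3 → ℝ) →ₗ[ℝ] V7 :=
  (LinearMap.id + (phiL S).smulRight S) ∘ₗ QL

lemma AL_apply (S : V7) (c : Fin 3 → ℝ) : AL S c = QL c + (H0 S (QL c)) • S := rfl

set_option maxHeartbeats 4000000

/-- Let `S ∈ V` with `H₀(S,S) = −1` (so `ε = +1`), and `W := {x : H₀(S,x) = 0}`.  Then
`H₀|_W` has signature (3,3) (there are 3-dimensional positive- and negative-definite subspaces
of `W` which together span `W`); `K_S` restricts to a paracomplex structure on `W`; and the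
`(±1)`-eigenspaces of `K_S|_W` are 3-dimensional and totally `H₀`-isotropic. -/
theorem crossMap_paracomplex (S : V7) (hS : H0 S S = -1)
    (K : V7 →ₗ[ℝ] V7) (hK : ∀ x y : V7, H0 (K x) y = Phi0 S x y) :
    (∃ P N : Submodule ℝ V7,
      (∀ x ∈ P, H0 S x = 0) ∧ (∀ x ∈ N, H0 S x = 0) ∧
      Module.finrank ℝ P = 3 ∧ Module.finrank ℝ N = 3 ∧
      (∀ x ∈ P, x ≠ 0 → 0 < H0 x x) ∧ (∀ x ∈ N, x ≠ 0 → H0 x x < 0) ∧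
      (∀ x : V7, H0 S x = 0 → x ∈ P ⊔ N)) ∧
    (∀ x : V7, H0 S x = 0 → H0 S (K x) = 0 ∧ K (K x) = x) ∧
    Module.finrank ℝ (Module.End.eigenspace K 1) = 3 ∧
    Module.finrank ℝ (Module.End.eigenspace K (-1)) = 3 ∧
    (∀ x ∈ Module.End.eigenspace K 1, ∀ y ∈ Module.End.eigenspace K 1, H0 x y = 0) ∧
    (∀ x ∈ Module.End.eigenspace K (-1), ∀ y ∈ Module.End.eigenspace K (-1), H0 x y = 0) := by
  have hr : Real.sqrt 2 * Real.sqrt 2 = 2 := Real.mul_self_sqrt (by norm_num)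
  have hS' : S 0 * S 6 + S 6 * S 0 + S 1 * S 4 + S 4 * S 1 + S 2 * S 5 + S 5 * S 2 - S 3 * S 3
      = -1 := hS
  have hsym : ∀ x y : V7, H0 x y = H0 y x := by
    intro x y; simp only [H0]; ring
  have hdeg : ∀ x : V7, Phi0 S x S = 0 := by
    intro x; simp only [Phi0, tripleDet]; ring
  have hskew : ∀ x y : V7, H0 (K x) y = - H0 (K y) x := by
    intro x y; rw [hK, hK]; simp only [Phi0, tripleDet]; ring
  have hneg : ∀ x y : V7, H0 (-x) y = -(H0 x y) := by
    intro x y; simp only [H0, Pi.neg_apply]; ring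
  have hWK : ∀ x : V7, H0 S (K x) = 0 := by
    intro x; rw [hsym, hK]; exact hdeg x
  have h0 : ∀ u : V7, K u 0 = S 3*u 0 - S 0*u 3 - Real.sqrt 2*S 2*u 1 + Real.sqrt 2*S 1*u 2 := by
    intro u
    have h := hK u ![0,0,0,0,0,0,1]
    simp only [H0, Phi0, tripleDet, vec7_at0, vec7_at1, vec7_at2, vec7_at3, vec7_at4, vec7_at5,
      vec7_at6] at h
    linear_combination h
  have h1 : ∀ u : V7, K u 1 = -S 3*u 1 + S 1*u 3 + Real.sqrt 2*S 5*u 0 - Real.sqrt 2*S 0*u 5 := by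
    intro u
    have h := hK u ![0,0,0,0,1,0,0]
    simp only [H0, Phi0, tripleDet, vec7_at0, vec7_at1, vec7_at2, vec7_at3, vec7_at4, vec7_at5,
      vec7_at6] at h
    linear_combination h
  have h2 : ∀ u : V7, K u 2 = -S 3*u 2 + S 2*u 3 - Real.sqrt 2*S 4*u 0 + Real.sqrt 2*S 0*u 4 := by
    intro u
    have h := hK u ![0,0,0,0,0,1,0]
    simp only [H0, Phi0, tripleDet, vec7_at0, vec7_at1, vec7_at2, vec7_at3, vec7_at4, vec7_at5,
      vec7_at6] at h
    linear_combination h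
  have h3 : ∀ u : V7, K u 3 = S 6*u 0 - S 5*u 2 - S 4*u 1 + S 2*u 5 + S 1*u 4 - S 0*u 6 := by
    intro u
    have h := hK u ![0,0,0,1,0,0,0]
    simp only [H0, Phi0, tripleDet, vec7_at0, vec7_at1, vec7_at2, vec7_at3, vec7_at4, vec7_at5,
      vec7_at6] at h
    linear_combination -h
  have h4 : ∀ u : V7, K u 4 = -S 4*u 3 + S 3*u 4 - Real.sqrt 2*S 6*u 2 + Real.sqrt 2*S 2*u 6 := by
    intro u
    have h := hK u ![0,1,0,0,0,0,0]
    simp only [H0, Phi0, tripleDet, vec7_at0, vec7_at1, vec7_at2, vec7_at3, vec7_at4, vec7_at5,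
      vec7_at6] at h
    linear_combination h
  have h5 : ∀ u : V7, K u 5 = -S 5*u 3 + S 3*u 5 + Real.sqrt 2*S 6*u 1 - Real.sqrt 2*S 1*u 6 := by
    intro u
    have h := hK u ![0,0,1,0,0,0,0]
    simp only [H0, Phi0, tripleDet, vec7_at0, vec7_at1, vec7_at2, vec7_at3, vec7_at4, vec7_at5,
      vec7_at6] at h
    linear_combination h
  have h6 : ∀ u : V7, K u 6 = S 6*u 3 - S 3*u 6 - Real.sqrt 2*S 5*u 4 + Real.sqrt 2*S 4*u 5 := by
    intro u
    have h := hK u ![1,0,0,0,0,0,0]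
    simp only [H0, Phi0, tripleDet, vec7_at0, vec7_at1, vec7_at2, vec7_at3, vec7_at4, vec7_at5,
      vec7_at6] at h
    linear_combination h

  have hKK : ∀ x : V7, H0 S x = 0 → K (K x) = x := by
    intro x hx
    have hx' : S 0 * x 6 + S 6 * x 0 + S 1 * x 4 + S 4 * x 1 + S 2 * x 5 + S 5 * x 2 - S 3 * x 3
        = 0 := hx
    funext i
    fin_cases i
    · show K (K x) 0 = x 0
      simp only [h0, h1, h2, h3, h4, h5, h6]
      linear_combination (-(x 0)) * hS' + (S 0) * hx' + (-S 2*S 5*x 0 - S 1*S 4*x 0 + S 0*S 2*x 5 + S 0*S 1*x 4) * hr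
    · show K (K x) 1 = x 1
      simp only [h0, h1, h2, h3, h4, h5, h6]
      linear_combination (-(x 1)) * hS' + (S 1) * hx' + (-S 2*S 5*x 1 + S 1*S 5*x 2 - S 0*S 6*x 1 + S 0*S 1*x 6) * hr
    · show K (K x) 2 = x 2
      simp only [h0, h1, h2, h3, h4, h5, h6]
      linear_combination (-(x 2)) * hS' + (S 2) * hx' + (S 2*S 4*x 1 - S 1*S 4*x 2 - S 0*S 6*x 2 + S 0*S 2*x 6) * hr
    · show K (K x) 3 = x 3
      simp only [h0, h1, h2, h3, h4, h5, h6]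
      linear_combination (-(x 3)) * hS' + (S 3) * hx' + (0) * hr
    · show K (K x) 4 = x 4
      simp only [h0, h1, h2, h3, h4, h5, h6]
      linear_combination (-(x 4)) * hS' + (S 4) * hx' + (S 4*S 6*x 0 - S 2*S 5*x 4 + S 2*S 4*x 5 - S 0*S 6*x 4) * hr
    · show K (K x) 5 = x 5
      simp only [h0, h1, h2, h3, h4, h5, h6]
      linear_combination (-(x 5)) * hS' + (S 5) * hx' + (S 5*S 6*x 0 + S 1*S 5*x 4 - S 1*S 4*x 5 - S 0*S 6*x 5) * hr
    · show K (K x) 6 = x 6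
      simp only [h0, h1, h2, h3, h4, h5, h6]
      linear_combination (-(x 6)) * hS' + (S 6) * hx' + (S 5*S 6*x 2 + S 4*S 6*x 1 - S 2*S 5*x 6 - S 1*S 4*x 6) * hr
  -- ## finrank of ker (phiL S)
  have hV7 : Module.finrank ℝ V7 = 7 := Module.finrank_fin_fun ℝ
  have hφtop : LinearMap.range (phiL S) = ⊤ := by
    rw [LinearMap.range_eq_top]
    intro t
    refine ⟨(-t) • S, ?_⟩
    rw [map_smul, phiL_apply, hS, smul_eq_mul]
    ring
  have hkerφ : Module.finrank ℝ (LinearMap.ker (phiL S)) = 6 := by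
    have h := LinearMap.finrank_range_add_finrank_ker (phiL S)
    rw [hφtop, finrank_top, Module.finrank_self, hV7] at h
    omega
  -- ## finrank of ker psiL
  have hψtop : LinearMap.range psiL = ⊤ := by
    rw [LinearMap.range_eq_top]
    intro v
    refine ⟨![v 0, v 1, v 2, 0, 0, 0, 0], ?_⟩
    funext i
    fin_cases i <;> simp
  have hkerψ : Module.finrank ℝ (LinearMap.ker psiL) = 4 := by
    have h := LinearMap.finrank_range_add_finrank_ker psiL
    rw [hψtop, finrank_top, Module.finrank_fin_fun, hV7] at h
    omega
  -- ## the special negative vector n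
  set n : V7 := ![S 0 - S 6, S 1 - S 4, S 2 - S 5, S 3,
    -(S 1 - S 4), -(S 2 - S 5), -(S 0 - S 6)] with hn_def
  have hnψ : n ∈ LinearMap.ker psiL := by
    rw [LinearMap.mem_ker]
    funext i
    fin_cases i <;> simp [hn_def] <;> ring
  have hnφval : phiL S n = -((S 0 - S 6)^2 + (S 1 - S 4)^2 + (S 2 - S 5)^2 + S 3^2) := by
    simp only [phiL_apply, H0, hn_def, vec7_at0, vec7_at1, vec7_at2, vec7_at3, vec7_at4,
      vec7_at5, vec7_at6]
    ring
  have hnφ : phiL S n ≠ 0 := by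
    rw [hnφval]
    intro h
    nlinarith [sq_nonneg (S 0 - S 6), sq_nonneg (S 1 - S 4), sq_nonneg (S 2 - S 5), sq_nonneg (S 3),
      sq_nonneg (S 0 + S 6), sq_nonneg (S 1 + S 4), sq_nonneg (S 2 + S 5)]
  -- ## N := N₀ ⊓ S^⊥ and its finrank
  set N : Submodule ℝ V7 := LinearMap.ker psiL ⊓ LinearMap.ker (phiL S) with hN_def
  have hsupNφ : LinearMap.ker psiL ⊔ LinearMap.ker (phiL S) = ⊤ := by
    rw [eq_top_iff]
    rintro x -
    have hxeq : x = (phiL S x / phiL S n) • n + (x - (phiL S x / phiL S n) • n) := by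
      abel
    rw [hxeq]
    refine Submodule.add_mem_sup (Submodule.smul_mem _ _ hnψ) (LinearMap.mem_ker.mpr ?_)
    rw [map_sub, map_smul, smul_eq_mul]
    have hn0 : H0 S n ≠ 0 := hnφ
    field_simp
    ring
  have hNfin : Module.finrank ℝ N = 3 := by
    have h := Submodule.finrank_sup_add_finrank_inf_eq (LinearMap.ker psiL)
      (LinearMap.ker (phiL S))
    rw [hsupNφ, finrank_top, hV7, hkerφ, hkerψ, ← hN_def] at h
    omega
  -- ## N is negative definite and inside S^⊥
  have hNW : ∀ x ∈ N, H0 S x = 0 := by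
    intro x hx
    exact LinearMap.mem_ker.mp hx.2
  have hNneg : ∀ x ∈ N, x ≠ 0 → H0 x x < 0 := by
    intro x hx hxne
    have hψx := LinearMap.mem_ker.mp hx.1
    have e0 : x 0 + x 6 = 0 := by
      have := congrFun hψx 0; simpa using this
    have e1 : x 1 + x 4 = 0 := by
      have := congrFun hψx 1; simpa using this
    have e2 : x 2 + x 5 = 0 := by
      have := congrFun hψx 2; simpa using this
    have hHxx : H0 x x = -(2*(x 0)^2 + 2*(x 1)^2 + 2*(x 2)^2 + (x 3)^2) := by
      simp only [H0]
      linear_combination (2*(x 0)) * e0 + (2*(x 1)) * e1 + (2*(x 2)) * e2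
    have hxkey : x 0 ≠ 0 ∨ x 1 ≠ 0 ∨ x 2 ≠ 0 ∨ x 3 ≠ 0 := by
      by_contra hcon
      push_neg at hcon
      obtain ⟨k0, k1, k2, k3⟩ := hcon
      apply hxne
      funext i
      fin_cases i
      · exact k0
      · exact k1
      · exact k2
      · exact k3
      · show x 4 = 0; linarith
      · show x 5 = 0; linarith
      · show x 6 = 0; linarith
    rw [hHxx]
    rcases hxkey with h | h | h | h
    · linarith [sq_nonneg (x 1), sq_nonneg (x 2), sq_nonneg (x 3), pow_two_pos_of_ne_zero h]
    · linarith [sq_nonneg (x 0), sq_nonneg (x 2), sq_nonneg (x 3), pow_two_pos_of_ne_zero h]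
    · linarith [sq_nonneg (x 0), sq_nonneg (x 1), sq_nonneg (x 3), pow_two_pos_of_ne_zero h]
    · linarith [sq_nonneg (x 0), sq_nonneg (x 1), sq_nonneg (x 2), pow_two_pos_of_ne_zero h]
  -- ## P := range (AL S)
  set P : Submodule ℝ V7 := LinearMap.range (AL S) with hP_def
  have hAval : ∀ c : Fin 3 → ℝ, H0 (AL S c) (AL S c)
      = 2*((c 0)^2 + (c 1)^2 + (c 2)^2) + (H0 S (QL c))^2 := by
    intro c
    have happ : ∀ i : Fin 7, AL S c i = QL c i + (H0 S (QL c)) * S i := fun i => rfl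
    simp only [H0, happ, QL_apply, vec7_at0, vec7_at1, vec7_at2, vec7_at3, vec7_at4, vec7_at5,
      vec7_at6]
    linear_combination ((S 0 * c 0 + S 6 * c 0 + S 1 * c 1 + S 4 * c 1 + S 2 * c 2 + S 5 * c 2)^2) * hS'
  have hPW : ∀ x ∈ P, H0 S x = 0 := by
    rintro x ⟨c, rfl⟩
    have happ : ∀ i : Fin 7, AL S c i = QL c i + (H0 S (QL c)) * S i := fun i => rfl
    show H0 S (AL S c) = 0
    simp only [H0, happ, QL_apply, vec7_at0, vec7_at1, vec7_at2, vec7_at3, vec7_at4, vec7_at5,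
      vec7_at6]
    linear_combination ((S 0 * c 0 + S 6 * c 0 + S 1 * c 1 + S 4 * c 1 + S 2 * c 2 + S 5 * c 2)) * hS'
  have hPpos : ∀ x ∈ P, x ≠ 0 → 0 < H0 x x := by
    rintro x ⟨c, rfl⟩ hxne
    rw [hAval c]
    have hcne : c ≠ 0 := by
      rintro rfl
      exact hxne (map_zero (AL S))
    have : c 0 ≠ 0 ∨ c 1 ≠ 0 ∨ c 2 ≠ 0 := by
      by_contra hcon
      push_neg at hcon
      obtain ⟨k0, k1, k2⟩ := hcon
      apply hcne
      funext i
      fin_cases i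
      · exact k0
      · exact k1
      · exact k2
    rcases this with h | h | h
    · linarith [sq_nonneg (c 1), sq_nonneg (c 2), sq_nonneg (H0 S (QL c)),
        pow_two_pos_of_ne_zero h]
    · linarith [sq_nonneg (c 0), sq_nonneg (c 2), sq_nonneg (H0 S (QL c)),
        pow_two_pos_of_ne_zero h]
    · linarith [sq_nonneg (c 0), sq_nonneg (c 1), sq_nonneg (H0 S (QL c)),
        pow_two_pos_of_ne_zero h]
  have hAinj : Function.Injective (AL S) := by
    rw [← LinearMap.ker_eq_bot, LinearMap.ker_eq_bot']
    intro c hc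
    have h := hAval c
    rw [hc] at h
    have h00 : H0 (0 : V7) (0 : V7) = 0 := by simp [H0]
    rw [h00] at h
    have k0 : c 0 = 0 := by
      have hz : (c 0)^2 = 0 := by
        linarith [sq_nonneg (c 0), sq_nonneg (c 1), sq_nonneg (c 2), sq_nonneg (H0 S (QL c))]
      exact sq_eq_zero_iff.mp hz
    have k1 : c 1 = 0 := by
      have hz : (c 1)^2 = 0 := by
        linarith [sq_nonneg (c 0), sq_nonneg (c 1), sq_nonneg (c 2), sq_nonneg (H0 S (QL c))]
      exact sq_eq_zero_iff.mp hz
    have k2 : c 2 = 0 := by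
      have hz : (c 2)^2 = 0 := by
        linarith [sq_nonneg (c 0), sq_nonneg (c 1), sq_nonneg (c 2), sq_nonneg (H0 S (QL c))]
      exact sq_eq_zero_iff.mp hz
    funext i
    fin_cases i
    · exact k0
    · exact k1
    · exact k2
  have hPfin : Module.finrank ℝ P = 3 := by
    rw [hP_def, LinearMap.finrank_range_of_inj hAinj]
    exact Module.finrank_fin_fun ℝ
  have hPN : P ⊓ N = ⊥ := by
    rw [eq_bot_iff]
    rintro x ⟨hxP, hxN⟩
    rw [Submodule.mem_bot]
    by_contra hxne
    exact absurd (hPpos x hxP hxne) (not_lt.mpr (le_of_lt (hNneg x hxN hxne)))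
  have hPNsup : Module.finrank ℝ ↥(P ⊔ N) = 6 := by
    have h := Submodule.finrank_sup_add_finrank_inf_eq P N
    rw [hPN, finrank_bot, hPfin, hNfin] at h
    omega
  have hPNle : P ⊔ N ≤ LinearMap.ker (phiL S) := by
    apply sup_le
    · rintro x hx
      exact LinearMap.mem_ker.mpr (hPW x hx)
    · exact inf_le_right
  have hPNeq : P ⊔ N = LinearMap.ker (phiL S) :=
    Submodule.eq_of_le_of_finrank_eq hPNle (by rw [hPNsup, hkerφ])
  -- ## eigenspaces
  set E1 := Module.End.eigenspace K 1 with hE1_def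
  set Em := Module.End.eigenspace K (-1) with hEm_def
  have hmem1 : ∀ x : V7, x ∈ E1 ↔ K x = x := by
    intro x
    rw [hE1_def, Module.End.mem_eigenspace_iff, one_smul]
  have hmemm : ∀ x : V7, x ∈ Em ↔ K x = -x := by
    intro x
    rw [hEm_def, Module.End.mem_eigenspace_iff, neg_one_smul]
  have hE1W : ∀ x ∈ E1, H0 S x = 0 := by
    intro x hx
    have hKx := (hmem1 x).mp hx
    have h := hWK x
    rwa [hKx] at h
  have hEmW : ∀ x ∈ Em, H0 S x = 0 := by
    intro x hx
    have hKx := (hmemm x).mp hx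
    have h := hWK x
    rw [hKx, hsym, hneg, hsym] at h
    linarith
  have iso1 : ∀ x ∈ E1, ∀ y ∈ E1, H0 x y = 0 := by
    intro x hx y hy
    have hx' := (hmem1 x).mp hx
    have hy' := (hmem1 y).mp hy
    have h := hskew x y
    rw [hx', hy'] at h
    have h2 := hsym x y
    linarith
  have isom : ∀ x ∈ Em, ∀ y ∈ Em, H0 x y = 0 := by
    intro x hx y hy
    have hx' := (hmemm x).mp hx
    have hy' := (hmemm y).mp hy
    have h := hskew x y
    rw [hx', hy', hneg, hneg] at h
    have h2 := hsym x y
    linarith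
  have hE1N : E1 ⊓ N = ⊥ := by
    rw [eq_bot_iff]
    rintro x ⟨hx1, hxN⟩
    rw [Submodule.mem_bot]
    by_contra hxne
    exact absurd (iso1 x hx1 x hx1) (ne_of_lt (hNneg x hxN hxne))
  have hEmN : Em ⊓ N = ⊥ := by
    rw [eq_bot_iff]
    rintro x ⟨hx1, hxN⟩
    rw [Submodule.mem_bot]
    by_contra hxne
    exact absurd (isom x hx1 x hx1) (ne_of_lt (hNneg x hxN hxne))
  have hE1le : E1 ≤ LinearMap.ker (phiL S) := fun x hx => LinearMap.mem_ker.mpr (hE1W x hx)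
  have hEmle : Em ≤ LinearMap.ker (phiL S) := fun x hx => LinearMap.mem_ker.mpr (hEmW x hx)
  have hsplit : E1 ⊔ Em = LinearMap.ker (phiL S) := by
    apply le_antisymm (sup_le hE1le hEmle)
    intro x hx
    have hx0 : H0 S x = 0 := hx
    have hKKx := hKK x hx0
    have m1 : ((1:ℝ)/2) • (x + K x) ∈ E1 := by
      rw [hmem1, map_smul, map_add, hKKx]
      module
    have m2 : ((1:ℝ)/2) • (x - K x) ∈ Em := by
      rw [hmemm, map_smul, map_sub, hKKx]
      module
    have hxdec : x = ((1:ℝ)/2) • (x + K x) + ((1:ℝ)/2) • (x - K x) := by module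
    rw [hxdec]
    exact Submodule.add_mem_sup m1 m2
  have hE1Em : E1 ⊓ Em = ⊥ := by
    rw [eq_bot_iff]
    rintro x ⟨hx1, hx2⟩
    rw [Submodule.mem_bot]
    have a := (hmem1 x).mp hx1
    have b := (hmemm x).mp hx2
    have hxe : x = -x := by
      conv_lhs => rw [← a]
      exact b
    funext i
    have h := congrFun hxe i
    simp only [Pi.neg_apply] at h
    have : x i = 0 := by linarith
    exact this
  have hsum : Module.finrank ℝ E1 + Module.finrank ℝ Em = 6 := by
    have h := Submodule.finrank_sup_add_finrank_inf_eq E1 Em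
    rw [hsplit, hE1Em, finrank_bot, hkerφ] at h
    omega
  have hb1 : Module.finrank ℝ E1 ≤ 3 := by
    have h := Submodule.finrank_sup_add_finrank_inf_eq E1 N
    rw [hE1N, finrank_bot] at h
    have hle : E1 ⊔ N ≤ LinearMap.ker (phiL S) := sup_le hE1le inf_le_right
    have hm := Submodule.finrank_mono hle
    rw [hkerφ] at hm
    omega
  have hbm : Module.finrank ℝ Em ≤ 3 := by
    have h := Submodule.finrank_sup_add_finrank_inf_eq Em N
    rw [hEmN, finrank_bot] at h
    have hle : Em ⊔ N ≤ LinearMap.ker (phiL S) := sup_le hEmle inf_le_right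
    have hm := Submodule.finrank_mono hle
    rw [hkerφ] at hm
    omega
  refine ⟨⟨P, N, hPW, hNW, hPfin, hNfin, hPpos, hNneg, ?_⟩, ?_, ?_, ?_, iso1, isom⟩
  · intro x hx
    rw [hPNeq]
    exact LinearMap.mem_ker.mpr hx
  · intro x hx
    exact ⟨hWK x, hKK x hx⟩
  · omega
  · omega

end
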